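/- Let Q ≥ 2 be an integer, let ε_f be a real number with 0 < |ε_f| < 1/2, and let m be an integer with 1 ≤ |m| ≤ Q − 1. Then sin²(π(ε_f + m)/Q) > sin²(π ε_f / Q); equivalently, the ratio sin²(π(ε_f + m)/Q) / sin²(π ε_f / Q) is strictly greater than 1. -/
import Mathlib

open Real

lemma sin_sq_abs (x : ℝ) : Real.sin |x| ^ 2 = Real.sin x ^ 2 := by
  rcases abs_cases x with ⟨h, _⟩ | ⟨h, _⟩
  · rw [h]
  · rw [h, Real.sin_neg, neg_sq]

lemma sin_sq_fract (t : ℝ) :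
    Real.sin (Real.pi * t) ^ 2 = Real.sin (Real.pi * |t - round t|) ^ 2 := by
  have h : Real.pi * t = Real.pi * (t - round t) + (round t : ℤ) * Real.pi := by
    push_cast; ring
  rw [h, Real.sin_add_int_mul_pi, mul_pow]
  have h1 : ((-1 : ℝ) ^ (round t : ℤ)) ^ 2 = 1 := by
    rcases Int.even_or_odd (round t) with he | he
    · rw [he.neg_one_zpow]; norm_num
    · rw [Odd.neg_one_zpow he]; norm_num
  have h2 : Real.pi * |t - round t| = |Real.pi * (t - round t)| := by
    rw [abs_mul, abs_of_nonneg Real.pi_pos.le]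
  rw [h1, one_mul, h2, sin_sq_abs]

/-- For `0 < |ε_f| < 1/2` and an integer `m` with `1 ≤ |m| ≤ Q − 1`,
`sin²(π(ε_f+m)/Q) > sin²(πε_f/Q)`; equivalently the ratio exceeds `1`. -/
theorem stmt18 (Q : ℕ) (hQ : 2 ≤ Q) (εf : ℝ) (hε0 : 0 < |εf|) (hε : |εf| < 1 / 2)
    (m : ℤ) (hm1 : 1 ≤ |m|) (hm2 : |m| ≤ (Q : ℤ) - 1) :
    Real.sin (Real.pi * (εf + (m : ℝ)) / Q) ^ 2 > Real.sin (Real.pi * εf / Q) ^ 2 ∧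
    Real.sin (Real.pi * (εf + (m : ℝ)) / Q) ^ 2 / Real.sin (Real.pi * εf / Q) ^ 2 > 1 := by
  have hQ0 : (0 : ℝ) < Q := by positivity
  have hQR : (2 : ℝ) ≤ Q := by exact_mod_cast hQ
  have hle : εf ≤ |εf| := le_abs_self εf
  have hge : -|εf| ≤ εf := neg_abs_le εf
  set a : ℝ := εf / Q with ha
  set t : ℝ := (εf + m) / Q with ht
  have hra : round a = 0 := by
    apply round_eq_zero_iff.mpr
    constructor
    · rw [ha, le_div_iff₀ hQ0]; nlinarith
    · rw [ha, div_lt_iff₀ hQ0]; nlinarith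
  have haabs : |a - round a| = |εf| / Q := by
    rw [hra]; push_cast; rw [sub_zero, ha, abs_div, abs_of_pos hQ0]
  set r : ℝ := t - round t with hr
  have hrle : |r| ≤ 1 / 2 := abs_sub_round t
  have hkey : |εf| / Q < |r| := by
    by_contra hcon
    push_neg at hcon
    have hrQ : |r| * Q ≤ |εf| := by
      have := mul_le_mul_of_nonneg_right hcon hQ0.le
      rwa [div_mul_cancel₀ _ hQ0.ne'] at this
    have heq : εf + m = (round t : ℝ) * Q + r * Q := by
      rw [hr, ht]; field_simp; ring
    have hint : (m : ℝ) - (round t : ℝ) * Q = r * Q - εf := by linarith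
    have habs : |(m : ℝ) - (round t : ℝ) * Q| < 1 := by
      rw [hint]
      calc |r * Q - εf| ≤ |r * Q| + |εf| := abs_sub _ _
        _ = |r| * Q + |εf| := by rw [abs_mul, abs_of_pos hQ0]
        _ ≤ |εf| + |εf| := by linarith
        _ < 1 := by linarith
    have hz : m - round t * (Q : ℤ) = 0 := by
      have h' : |((m - round t * (Q : ℤ) : ℤ) : ℝ)| < 1 := by
        push_cast
        convert habs using 2
      rw [← Int.cast_abs] at h'
      have h'' : |m - round t * (Q : ℤ)| < 1 := by exact_mod_cast h'
      rw [abs_lt] at h''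
      omega
    have hm : m = round t * (Q : ℤ) := by omega
    rcases eq_or_ne (round t) 0 with h0 | h0
    · rw [h0, zero_mul] at hm
      rw [hm] at hm1
      norm_num at hm1
    · have h1 : (1 : ℤ) ≤ |round t| := Int.one_le_abs h0
      have h2 : (Q : ℤ) ≤ |m| := by
        rw [hm, abs_mul, abs_of_nonneg (by positivity : (0:ℤ) ≤ (Q:ℤ))]
        nlinarith
      omega
  have h1 : Real.pi * (εf + m) / Q = Real.pi * t := by rw [ht]; ring
  have h2 : Real.pi * εf / Q = Real.pi * a := by rw [ha]; ring
  rw [h1, h2, sin_sq_fract t, sin_sq_fract a, haabs, ← hr]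
  have hεQ : |εf| / Q < 1 / 2 := by
    rw [div_lt_iff₀ hQ0]; nlinarith
  have hx1 : (0 : ℝ) < Real.pi * (|εf| / Q) :=
    mul_pos Real.pi_pos (div_pos hε0 hQ0)
  have hx2 : Real.pi * (|εf| / Q) < Real.pi * |r| :=
    mul_lt_mul_of_pos_left hkey Real.pi_pos
  have hx3 : Real.pi * |r| ≤ Real.pi / 2 := by nlinarith [Real.pi_pos]
  have hmono : Real.sin (Real.pi * (|εf| / Q)) < Real.sin (Real.pi * |r|) := by
    apply Real.strictMonoOn_sin
    · exact ⟨by nlinarith [Real.pi_pos], by linarith⟩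
    · exact ⟨by nlinarith [Real.pi_pos, abs_nonneg r], hx3⟩
    · exact hx2
  have hpos : 0 < Real.sin (Real.pi * (|εf| / Q)) := by
    apply Real.sin_pos_of_pos_of_lt_pi hx1
    nlinarith [Real.pi_pos]
  have hsq : Real.sin (Real.pi * (|εf| / Q)) ^ 2 < Real.sin (Real.pi * |r|) ^ 2 :=
    pow_lt_pow_left₀ hmono hpos.le (by norm_num)
  refine ⟨hsq, ?_⟩
  rw [gt_iff_lt, lt_div_iff₀ (by positivity)]
  linarith
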